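/- Let cos θ ≤ 1/n and cos φ > -1/n, and set f_0 := (1/n - cos θ) + (1/n + cos φ)² / ((1+cos φ)²/(1-cos θ) + 1 - 1/n). If f_0 > 0, then any code C ⊂ Cap(e,φ) ⊂ S^{n-1} with minimal angular distance θ satisfies card(C) ≤ 2(1 - cos θ)/f_0; moreover this bound is strictly smaller than the LP bound 2(1-cos θ)/(1/n - cos θ) for the whole sphere when cos θ < 1/n. -/

import Mathlib

open scoped RealInnerProductSpace
open Finset

private noncomputable def wmat (n : ℕ) (x : EuclideanSpace ℝ (Fin n)) :
    EuclideanSpace ℝ (Fin n × Fin n) :=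
  WithLp.toLp 2 fun q : Fin n × Fin n => x q.1 * x q.2 - (if q.1 = q.2 then 1 / (n : ℝ) else 0)

private lemma inner_sum_eq {ι : Type*} [Fintype ι] (x y : EuclideanSpace ℝ ι) :
    ⟪x, y⟫ = ∑ i, x i * y i := by
  simp [PiLp.inner_apply, RCLike.inner_apply, conj_trivial]
  exact Finset.sum_congr rfl fun _ _ => mul_comm _ _

private lemma sum_sq_unit (n : ℕ) (x : EuclideanSpace ℝ (Fin n)) (hx : ‖x‖ = 1) :
    ∑ i, x i * x i = 1 := by
  have h := real_inner_self_eq_norm_sq x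
  rw [hx] at h
  rw [inner_sum_eq, one_pow] at h; exact h

private lemma inner_wmat (n : ℕ) (x y : EuclideanSpace ℝ (Fin n))
    (hx : ‖x‖ = 1) (hy : ‖y‖ = 1) :
    ⟪wmat n x, wmat n y⟫ = ⟪x, y⟫ ^ 2 - 1 / n := by
  have hn0 : (n : ℝ) ≠ 0 := by
    rcases Nat.eq_zero_or_pos n with h | h
    · subst h
      exfalso
      have : x = 0 := Subsingleton.elim x 0
      rw [this, norm_zero] at hx; norm_num at hx
    · positivity
  rw [inner_sum_eq, inner_sum_eq]
  rw [Fintype.sum_prod_type]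
  have key : ∀ i : Fin n,
      ∑ j, wmat n x (i, j) * wmat n y (i, j)
        = (x i * y i) * (∑ j, x j * y j)
          - (1/(n:ℝ)) * (x i * x i) - (1/(n:ℝ)) * (y i * y i) + 1/(n:ℝ)^2 := by
    intro i
    have : ∀ j : Fin n, wmat n x (i, j) * wmat n y (i, j)
        = (x i * y i) * (x j * y j)
          - (if i = j then (1/(n:ℝ)) * (x i * x j) else 0)
          - (if i = j then (1/(n:ℝ)) * (y i * y j) else 0)
          + (if i = j then 1/(n:ℝ)^2 else 0) := by
      intro j
      simp only [wmat]
      by_cases h : i = j <;> simp [h] <;> ring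
    rw [Finset.sum_congr rfl (fun j _ => this j)]
    simp only [Finset.sum_add_distrib, Finset.sum_sub_distrib,
      Finset.sum_ite_eq, Finset.mem_univ, if_true, ← Finset.mul_sum]
  rw [Finset.sum_congr rfl (fun i _ => key i)]
  simp only [Finset.sum_add_distrib, Finset.sum_sub_distrib, ← Finset.sum_mul,
    ← Finset.mul_sum, Finset.sum_const, Finset.card_univ, Fintype.card_fin,
    nsmul_eq_mul, sum_sq_unit n x hx, sum_sq_unit n y hy]
  field_simp
  ring

private lemma sum_sum_inner {ι : Type*} {F : Type*} [NormedAddCommGroup F]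
    [InnerProductSpace ℝ F] (s : Finset ι) (f : ι → F) :
    ⟪∑ i ∈ s, f i, ∑ j ∈ s, f j⟫ = ∑ i ∈ s, ∑ j ∈ s, ⟪f i, f j⟫ := by
  rw [sum_inner]
  exact Finset.sum_congr rfl fun i _ => inner_sum _ _ _

private lemma key_ineq (N S₁ S₂ U₁ U₂ q k p m L b D a f : ℝ)
    (hN : 0 ≤ N) (hm : 0 < m) (hL : 0 < L)
    (hDL : D * L = b ^ 2 + m * L)
    (haD : a * D = q + p)
    (hf : f = (q - k) + a * (q + p))
    (h1 : U₁ ^ 2 ≤ S₁)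
    (h2 : (U₂ - q * N) ^ 2 ≤ (S₂ - q * N ^ 2) * m)
    (h3 : S₂ + L * S₁ - k * N ^ 2 + 2 * a * N * (U₂ - b * U₁ + p * N) ≤ 2 * N * L) :
    N * f ≤ 2 * L := by
  have step1 : 0 ≤ S₂ - q * N ^ 2 + 2 * a * N * (U₂ - q * N) + a ^ 2 * N ^ 2 * m := by
    nlinarith [h2, hm, sq_nonneg (U₂ - q * N + a * N * m)]
  have habb : a ^ 2 * b ^ 2 = (q + p) * a * L - a ^ 2 * m * L := by
    linear_combination (a * L) * haD - a ^ 2 * hDL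
  have step2 : L * S₁ - 2 * a * b * N * U₁ ≥ -(N ^ 2 * (a * (q + p) - a ^ 2 * m)) := by
    have h2' : L * (L * S₁ - 2 * a * b * N * U₁) ≥ -(a * b * N) ^ 2 := by
      nlinarith [h1, mul_pos hL hL, sq_nonneg (L * U₁ - a * b * N)]
    nlinarith [h2', habb, hL]
  have main : N ^ 2 * f ≤ 2 * N * L := by nlinarith [step1, step2, h3]
  rcases eq_or_lt_of_le hN with h | h
  · rw [← h]; nlinarith [hL]
  · nlinarith [main, h]

set_option maxHeartbeats 1000000 in
theorem cap_code_degree_two_bound (n : ℕ) (hn : 1 ≤ n) (θ φ : ℝ)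
    (e : EuclideanSpace ℝ (Fin n)) (he : ‖e‖ = 1)
    (hθ : Real.cos θ ≤ 1 / n) (hφ : -(1 / (n : ℝ)) < Real.cos φ)
    (f₀ : ℝ)
    (hf₀def : f₀ = (1 / n - Real.cos θ) +
      (1 / n + Real.cos φ) ^ 2 /
        ((1 + Real.cos φ) ^ 2 / (1 - Real.cos θ) + 1 - 1 / n))
    (hf₀ : 0 < f₀)
    (C : Finset (EuclideanSpace ℝ (Fin n)))
    (hunit : ∀ c ∈ C, ‖c‖ = 1)
    (hcap : ∀ c ∈ C, Real.cos φ ≤ ⟪e, c⟫)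
    (hdist : ∀ c ∈ C, ∀ c' ∈ C, c ≠ c' → ⟪c, c'⟫ ≤ Real.cos θ) :
    (C.card : ℝ) ≤ 2 * (1 - Real.cos θ) / f₀ ∧
      (Real.cos θ < 1 / n →
        2 * (1 - Real.cos θ) / f₀ <
          2 * (1 - Real.cos θ) / (1 / n - Real.cos θ)) := by
  classical
  set k := Real.cos θ with hk
  set p := Real.cos φ with hp
  have hn0 : (0:ℝ) < (n:ℝ) := by exact_mod_cast hn
  have hq1 : (1:ℝ)/(n:ℝ) ≤ 1 := by
    rw [div_le_one hn0]; exact_mod_cast hn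
  have hqpos : (0:ℝ) < 1/(n:ℝ) := by positivity
  -- the second conjunct first
  have part2 : k < 1/(n:ℝ) →
      2 * (1 - k) / f₀ < 2 * (1 - k) / (1/(n:ℝ) - k) := by
    intro hkq
    have hL : (0:ℝ) < 1 - k := by linarith
    have hb : (0:ℝ) < 1 + p := by
      have : (1:ℝ)/(n:ℝ) ≤ 1 := hq1
      linarith
    have hD : (0:ℝ) < (1 + p)^2/(1 - k) + 1 - 1/(n:ℝ) := by
      have h1 : (0:ℝ) < (1 + p)^2/(1 - k) := by positivity
      have h2 : (0:ℝ) ≤ 1 - 1/(n:ℝ) := by linarith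
      linarith
    have hqp : (0:ℝ) < 1/(n:ℝ) + p := by linarith
    have hgt : 1/(n:ℝ) - k < f₀ := by
      rw [hf₀def]
      have : (0:ℝ) < (1/(n:ℝ) + p)^2 / ((1 + p)^2/(1 - k) + 1 - 1/(n:ℝ)) := by
        apply div_pos (by positivity)
        linarith
      linarith
    have h2L : (0:ℝ) < 2 * (1 - k) := by linarith
    exact div_lt_div_of_pos_left h2L (by linarith) hgt
  refine ⟨?_, part2⟩
  -- main bound
  rcases eq_or_lt_of_le hn with hn1 | hn2
  · -- n = 1
    have hn1' : n = 1 := hn1.symm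
    subst hn1'
    norm_num at hθ hφ
    have hf₀def' : f₀ = (1 - k) + (1 + p)^2 / ((1 + p)^2/(1 - k) + 1 - 1) := by
      rw [hf₀def]; norm_num
    have hb : (0:ℝ) < 1 + p := by linarith
    rcases lt_or_eq_of_le hθ with hk1 | hk1
    · -- k < 1
      have hL : (0:ℝ) < 1 - k := by linarith
      have hf0eq : f₀ = 2 * (1 - k) := by
        rw [hf₀def']
        have hb2 : (1 + p)^2 ≠ 0 := by positivity
        have hL' : (1 - k) ≠ 0 := ne_of_gt hL
        field_simp
        ring
      have hcard : C.card ≤ 1 := by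
        apply Finset.card_le_one.mpr
        intro c hc c' hc'
        have key : ∀ d ∈ C, d = e := by
          intro d hd
          have h1 : ⟪e, d⟫ = e 0 * d 0 := by
            rw [inner_sum_eq]; simp [Fin.sum_univ_one]
          have he2 : e 0 * e 0 = 1 := by
            have := sum_sq_unit 1 e he; simpa [Fin.sum_univ_one] using this
          have hd2 : d 0 * d 0 = 1 := by
            have := sum_sq_unit 1 d (hunit d hd); simpa [Fin.sum_univ_one] using this
          have hcapd : p ≤ ⟪e, d⟫ := hcap d hd
          have hsq : (e 0 * d 0)^2 = 1 := by nlinarith [he2, hd2]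
          have hone : e 0 * d 0 = 1 := by
            have hfac : (e 0 * d 0 - 1) * (e 0 * d 0 + 1) = 0 := by nlinarith [hsq]
            rcases mul_eq_zero.mp hfac with h | h
            · linarith
            · exfalso
              have : ⟪e, d⟫ = -1 := by rw [h1]; linarith
              rw [this] at hcapd
              linarith
          have : d 0 = e 0 := by nlinarith [he2, hone]
          ext i
          have : i = 0 := Subsingleton.elim i 0
          rw [this]; exact ‹d 0 = e 0›
        rw [key c hc, key c' hc']
      have : (C.card : ℝ) ≤ 1 := by exact_mod_cast hcard
      have h1 : 2 * (1 - k) / f₀ = 1 := by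
        rw [hf0eq]; field_simp
      rw [h1]; exact this
    · -- k = 1 : contradiction with hf₀ > 0
      exfalso
      rw [hf₀def', hk1] at hf₀
      norm_num at hf₀
  · -- n ≥ 2
    have hnn : (2:ℝ) ≤ (n:ℝ) := by exact_mod_cast hn2
    set q : ℝ := 1/(n:ℝ) with hqdef
    have hq2 : q ≤ 1/2 := by
      rw [hqdef, div_le_div_iff₀ hn0 (by norm_num)]; linarith
    have hm : (0:ℝ) < 1 - q := by linarith
    have hL : (0:ℝ) < 1 - k := by linarith
    have hb : (0:ℝ) < 1 + p := by linarith
    have hqp : (0:ℝ) < q + p := by linarith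
    set L : ℝ := 1 - k with hLdef
    set b : ℝ := 1 + p with hbdef
    set D : ℝ := b^2/L + (1 - q) with hDdef
    have hDpos : (0:ℝ) < D := by
      have : (0:ℝ) ≤ b^2/L := by positivity
      rw [hDdef]; linarith
    set a : ℝ := (q + p)/D with hadef
    have ha : (0:ℝ) ≤ a := by positivity
    have haD : a * D = q + p := div_mul_cancel₀ _ (ne_of_gt hDpos)
    have hDL : D * L = b^2 + (1 - q) * L := by
      rw [hDdef]; field_simp
    have hf : f₀ = (q - k) + a * (q + p) := by
      rw [hf₀def, hadef, hDdef]
      ring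
    -- sums
    set N : ℝ := (C.card : ℝ) with hNdef
    set U₁ : ℝ := ∑ c ∈ C, ⟪e, c⟫ with hU₁
    set U₂ : ℝ := ∑ c ∈ C, ⟪e, c⟫^2 with hU₂
    set S₁ : ℝ := ∑ c ∈ C, ∑ c' ∈ C, ⟪c, c'⟫ with hS₁
    set S₂ : ℝ := ∑ c ∈ C, ∑ c' ∈ C, ⟪c, c'⟫^2 with hS₂
    have hNnn : (0:ℝ) ≤ N := by rw [hNdef]; positivity
    -- Cauchy-Schwarz 1
    have hCS1 : U₁^2 ≤ S₁ := by
      have h := real_inner_mul_inner_self_le e (∑ c ∈ C, c)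
      rw [real_inner_self_eq_norm_sq e, he] at h
      rw [inner_sum] at h
      have h2 : ⟪(∑ c ∈ C, c), (∑ c ∈ C, c)⟫ = ∑ c ∈ C, ∑ c' ∈ C, ⟪c, c'⟫ := by
        rw [sum_inner]
        exact Finset.sum_congr rfl fun c _ => inner_sum _ _ _
      rw [h2] at h
      nlinarith [h]
    -- Cauchy-Schwarz 2 (matrix)
    have hCS2 : (U₂ - q * N)^2 ≤ (S₂ - q * N^2) * (1 - q) := by
      have h := real_inner_mul_inner_self_le (wmat n e) (∑ c ∈ C, wmat n c)
      have hEE : ⟪wmat n e, wmat n e⟫ = 1 - q := by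
        rw [inner_wmat n e e he he, real_inner_self_eq_norm_sq e, he, hqdef]
        norm_num
      have hEM : ⟪wmat n e, (∑ c ∈ C, wmat n c)⟫ = U₂ - q * N := by
        rw [inner_sum]
        rw [Finset.sum_congr rfl fun c hc => inner_wmat n e c he (hunit c hc)]
        rw [Finset.sum_sub_distrib, Finset.sum_const, nsmul_eq_mul]
        rw [hU₂, hNdef, hqdef]
        ring
      have hMM : ⟪(∑ c ∈ C, wmat n c), (∑ c ∈ C, wmat n c)⟫ = S₂ - q * N^2 := by
        rw [sum_sum_inner]
        rw [Finset.sum_congr rfl fun c hc => Finset.sum_congr rfl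
          fun c' hc' => inner_wmat n c c' (hunit c hc) (hunit c' hc')]
        simp only [Finset.sum_sub_distrib, Finset.sum_const, nsmul_eq_mul]
        rw [hS₂, hNdef, hqdef]
        ring
      rw [hEE, hEM, hMM] at h
      nlinarith [h]
    -- main counting inequality
    have h3 : S₂ + L * S₁ - k * N^2 + 2 * a * N * (U₂ - b * U₁ + p * N) ≤ 2 * N * L := by
      set g : EuclideanSpace ℝ (Fin n) → ℝ := fun c => (⟪e, c⟫ - p) * (⟪e, c⟫ - 1) with hg
      have hgle : ∀ c ∈ C, g c ≤ 0 := by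
        intro c hc
        have h1 : p ≤ ⟪e, c⟫ := hcap c hc
        have h2 : ⟪e, c⟫ ≤ 1 := by
          have := real_inner_le_norm e c
          rw [he, hunit c hc] at this; simpa using this
        rw [hg]
        apply mul_nonpos_of_nonneg_of_nonpos <;> linarith
      have hpt : ∀ c ∈ C, ∀ c' ∈ C,
          (⟪c, c'⟫ + 1) * (⟪c, c'⟫ - k) + a * (g c + g c')
            ≤ (if c = c' then 2 * L else 0) := by
        intro c hc c' hc'
        have hgc := hgle c hc
        have hgc' := hgle c' hc'
        by_cases hcc : c = c'
        · subst hcc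
          rw [if_pos rfl]
          have h1 : ⟪c, c⟫ = 1 := by
            rw [real_inner_self_eq_norm_sq, hunit c hc]; norm_num
          rw [h1, hLdef]
          nlinarith [ha, hgc]
        · rw [if_neg hcc]
          have ht : ⟪c, c'⟫ ≤ k := hdist c hc c' hc' hcc
          have ht1 : -1 ≤ ⟪c, c'⟫ := by
            have h0 := abs_real_inner_le_norm c c'
            rw [hunit c hc, hunit c' hc'] at h0
            have h0' : |⟪c, c'⟫| ≤ 1 := by simpa using h0
            exact neg_le_of_abs_le h0'
          nlinarith [ha, hgc, hgc', mul_nonpos_of_nonneg_of_nonpos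
            (by linarith : (0:ℝ) ≤ ⟪c, c'⟫ + 1) (by linarith : ⟪c, c'⟫ - k ≤ 0)]
      have hsum : ∑ c ∈ C, ∑ c' ∈ C,
          ((⟪c, c'⟫ + 1) * (⟪c, c'⟫ - k) + a * (g c + g c'))
            ≤ ∑ c ∈ C, ∑ c' ∈ C, (if c = c' then 2 * L else 0) := by
        apply Finset.sum_le_sum
        intro c hc
        apply Finset.sum_le_sum
        intro c' hc'
        exact hpt c hc c' hc'
      have hRHS : ∑ c ∈ C, ∑ c' ∈ C, (if c = c' then 2 * L else 0) = N * (2 * L) := by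
        have : ∀ c ∈ C, ∑ c' ∈ C, (if c = c' then 2 * L else 0) = 2 * L := by
          intro c hc
          rw [Finset.sum_ite_eq]
          exact if_pos hc
        rw [Finset.sum_congr rfl this, Finset.sum_const, nsmul_eq_mul, hNdef]
      set G : ℝ := ∑ c ∈ C, g c with hG
      have hGval : G = U₂ - b * U₁ + p * N := by
        rw [hG]
        have : ∀ c ∈ C, g c = ⟪e, c⟫^2 - b * ⟪e, c⟫ + p := by
          intro c _
          rw [hg, hbdef]; dsimp only; ring
        rw [Finset.sum_congr rfl this]
        simp only [Finset.sum_add_distrib, Finset.sum_sub_distrib, ← Finset.mul_sum,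
          Finset.sum_const, nsmul_eq_mul]
        rw [hU₂, hU₁, hNdef]
        ring
      have hLHS : ∑ c ∈ C, ∑ c' ∈ C,
          ((⟪c, c'⟫ + 1) * (⟪c, c'⟫ - k) + a * (g c + g c'))
            = S₂ + (1 - k) * S₁ - k * N^2 + 2 * a * N * G := by
        have hinner : ∀ c ∈ C, ∑ c' ∈ C,
            ((⟪c, c'⟫ + 1) * (⟪c, c'⟫ - k) + a * (g c + g c'))
              = (∑ c' ∈ C, ⟪c, c'⟫^2) + (1 - k) * (∑ c' ∈ C, ⟪c, c'⟫)
                - k * N + N * (a * g c) + a * G := by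
          intro c hc
          have : ∀ c' ∈ C, ((⟪c, c'⟫ + 1) * (⟪c, c'⟫ - k) + a * (g c + g c'))
              = ⟪c, c'⟫^2 + (1 - k) * ⟪c, c'⟫ + (-k) + a * g c + a * g c' := by
            intro c' _; ring
          rw [Finset.sum_congr rfl this]
          simp only [Finset.sum_add_distrib, ← Finset.mul_sum, Finset.sum_const,
            nsmul_eq_mul]
          rw [← hG, hNdef]
          ring
        rw [Finset.sum_congr rfl hinner]
        simp only [Finset.sum_add_distrib, Finset.sum_sub_distrib, ← Finset.mul_sum,
          Finset.sum_const, nsmul_eq_mul]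
        rw [hS₂, hS₁, ← hNdef]
        ring
      rw [hLHS, hRHS, hGval] at hsum
      rw [hLdef] at hsum ⊢
      linarith [hsum]
    have hmain : N * f₀ ≤ 2 * L :=
      key_ineq N S₁ S₂ U₁ U₂ q k p (1 - q) L b D a f₀ hNnn hm (by rw [hLdef]; exact hL)
        hDL haD hf hCS1 hCS2 h3
    rw [le_div_iff₀ hf₀]
    exact hmain
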